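/- Let φ : X → Y be a surjective continuous map of topological spaces and Γ_X a presheaf of modules on X satisfying condition (M). Then both (φ_*Γ_X)⁺ and φ_*(Γ_X⁺) are sheaves on Y, and the natural map (φ_*Γ_X)⁺ → φ_*(Γ_X⁺) is injective. -/

import Mathlib

open Set Function

universe u

/-- A presheaf of `R`-modules on (the subsets of) a topological space `X`. -/
structure Psh (R : Type u) [CommRing R] (X : Type u) [TopologicalSpace X] where
  sec : Set X → Type u
  addCommGroup : ∀ U, AddCommGroup (sec U)
  module : ∀ U, Module R (sec U)
  res : ∀ ⦃V U : Set X⦄, V ⊆ U → sec U →ₗ[R] sec V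
  res_self : ∀ (U : Set X) (s : sec U), res (subset_refl U) s = s
  res_res : ∀ {W V U : Set X} (hWV : W ⊆ V) (hVU : V ⊆ U) (s : sec U),
      res hWV (res hVU s) = res (hWV.trans hVU) s

attribute [instance] Psh.addCommGroup Psh.module

variable {R : Type u} [CommRing R] {X : Type u} [TopologicalSpace X]

/-- `𝒰` is an open cover of `V`. -/
structure IsCover (𝒰 : Set (Set X)) (V : Set X) : Prop where
  isOpen : ∀ U ∈ 𝒰, IsOpen U
  subset : ∀ U ∈ 𝒰, U ⊆ V
  covers : V ⊆ ⋃₀ 𝒰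

/-- `𝒲` refines `𝒰`. -/
def Refines (𝒲 𝒰 : Set (Set X)) : Prop := ∀ W ∈ 𝒲, ∃ U ∈ 𝒰, W ⊆ U

/-- The collection of all open subsets of `X`. -/
def allOpens (X : Type u) [TopologicalSpace X] : Set (Set X) := {U : Set X | IsOpen U}

/-- The submodule of compatible `𝒰`-families of a presheaf. -/
def compatSub (R : Type u) [CommRing R] (Γ : Psh R X) (𝒰 : Set (Set X)) :
    Submodule R (∀ U : ↥𝒰, Γ.sec ↑U) where
  carrier := {γ | ∀ U V : ↥𝒰,
    Γ.res (inter_subset_left : (↑U : Set X) ∩ ↑V ⊆ ↑U) (γ U) =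
    Γ.res (inter_subset_right : (↑U : Set X) ∩ ↑V ⊆ ↑V) (γ V)}
  add_mem' := by
    intro a b ha hb U V
    show Γ.res _ (a U + b U) = Γ.res _ (a V + b V)
    rw [map_add, map_add, ha U V, hb U V]
  zero_mem' := by
    intro U V
    show Γ.res _ 0 = Γ.res _ 0
    rw [map_zero, map_zero]
  smul_mem' := by
    intro c a ha U V
    show Γ.res _ (c • a U) = Γ.res _ (c • a V)
    rw [map_smul, map_smul, ha U V]

/-- The module of compatible `𝒰`-families. -/
abbrev Compat (R : Type u) [CommRing R] (Γ : Psh R X) (𝒰 : Set (Set X)) : Type u :=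
  ↥(compatSub R Γ 𝒰)

/-- The monopresheaf condition (M), with respect to covers drawn from `B`. -/
def CondM (R : Type u) [CommRing R] (Γ : Psh R X) (B : Set (Set X)) : Prop :=
  ∀ (V : Set X), IsOpen V → ∀ (𝒰 : Set (Set X)), 𝒰 ⊆ B → ∀ (hc : IsCover 𝒰 V),
    ∀ s : Γ.sec V, (∀ U (hU : U ∈ 𝒰), Γ.res (hc.subset U hU) s = 0) → s = 0

/-- The gluing condition (G), with respect to covers drawn from `B`. -/
def CondG (R : Type u) [CommRing R] (Γ : Psh R X) (B : Set (Set X)) : Prop :=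
  ∀ (V : Set X), IsOpen V → ∀ (𝒰 : Set (Set X)), 𝒰 ⊆ B → ∀ (hc : IsCover 𝒰 V),
    ∀ γ : Compat R Γ 𝒰, ∃ s : Γ.sec V,
      ∀ U (hU : U ∈ 𝒰), Γ.res (hc.subset U hU) s = γ.1 ⟨U, hU⟩

variable (R) in
/-- Data exhibiting the presheaf `P` as the plus construction `Γ⁺` of `Γ`, relative to
covers drawn from the collection `B`: each `P(V)` is the direct limit of the modules
`Γ(𝒰)` of compatible families over covers `𝒰 ⊆ B` of `V`, and the restriction maps of
`P` are the induced ones. -/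
structure PlusData (Γ P : Psh R X) (B : Set (Set X)) where
  ι : ∀ {V : Set X} {𝒰 : Set (Set X)}, 𝒰 ⊆ B → IsCover 𝒰 V → Compat R Γ 𝒰 →ₗ[R] P.sec V
  ι_refine : ∀ {V : Set X} {𝒰 𝒲 : Set (Set X)} (hU : 𝒰 ⊆ B) (hcU : IsCover 𝒰 V)
      (hW : 𝒲 ⊆ B) (hcW : IsCover 𝒲 V) (γ : Compat R Γ 𝒰) (δ : Compat R Γ 𝒲),
      Refines 𝒲 𝒰 →
      (∀ (W : ↥𝒲) (U : ↥𝒰) (h : (↑W : Set X) ⊆ ↑U), δ.1 W = Γ.res h (γ.1 U)) →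
      ι hW hcW δ = ι hU hcU γ
  ι_surj : ∀ {V : Set X}, IsOpen V → ∀ p : P.sec V,
      ∃ (𝒰 : Set (Set X)) (hU : 𝒰 ⊆ B) (hc : IsCover 𝒰 V) (γ : Compat R Γ 𝒰),
        ι hU hc γ = p
  ι_exact : ∀ {V : Set X} {𝒰 : Set (Set X)} (hU : 𝒰 ⊆ B) (hc : IsCover 𝒰 V)
      (γ : Compat R Γ 𝒰), ι hU hc γ = 0 →
      ∃ (𝒲 : Set (Set X)) (hW : 𝒲 ⊆ B) (hcW : IsCover 𝒲 V), Refines 𝒲 𝒰 ∧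
        ∀ (W : ↥𝒲) (U : ↥𝒰) (h : (↑W : Set X) ⊆ ↑U), Γ.res h (γ.1 U) = 0
  ι_res : ∀ {V' V : Set X} {𝒰 𝒲 : Set (Set X)} (hVV : V' ⊆ V) (hU : 𝒰 ⊆ B)
      (hc : IsCover 𝒰 V) (hW : 𝒲 ⊆ B) (hcW : IsCover 𝒲 V')
      (γ : Compat R Γ 𝒰) (δ : Compat R Γ 𝒲),
      Refines 𝒲 𝒰 →
      (∀ (W : ↥𝒲) (U : ↥𝒰) (h : (↑W : Set X) ⊆ ↑U), δ.1 W = Γ.res h (γ.1 U)) →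
      P.res hVV (ι hU hc γ) = ι hW hcW δ

variable (R) in
/-- A map of presheaves of modules on `X`. -/
structure PshHom (Γ₁ Γ₂ : Psh R X) where
  app : ∀ U : Set X, Γ₁.sec U →ₗ[R] Γ₂.sec U
  naturality : ∀ {V U : Set X} (h : V ⊆ U) (s : Γ₁.sec U),
      app V (Γ₁.res h s) = Γ₂.res h (app U s)

/-- The pushforward of a presheaf along a map `φ : X → Y`. -/
def pushf {Y : Type u} [TopologicalSpace Y] (R : Type u) [CommRing R]
    {X : Type u} [TopologicalSpace X] (φ : X → Y) (Γ : Psh R X) : Psh R Y where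
  sec U := Γ.sec (φ ⁻¹' U)
  addCommGroup U := Γ.addCommGroup _
  module U := Γ.module _
  res _ _ h := Γ.res (preimage_mono h)
  res_self U s := Γ.res_self _ s
  res_res h1 h2 s := Γ.res_res _ _ s

section Aux
variable {R : Type u} [CommRing R] {X : Type u} [TopologicalSpace X]

lemma res_agree (Γ : Psh R X) {ι : Type u} {A : ι → Set X} {s : ∀ i, Γ.sec (A i)}
    (hcompat : ∀ i j, Γ.res (inter_subset_left : A i ∩ A j ⊆ A i) (s i)
      = Γ.res inter_subset_right (s j))
    {W : Set X} {i j : ι} (h : W ⊆ A i) (h' : W ⊆ A j) :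
    Γ.res h (s i) = Γ.res h' (s j) := by
  have hW : W ⊆ A i ∩ A j := subset_inter h h'
  calc Γ.res h (s i) = Γ.res hW (Γ.res (inter_subset_left : A i ∩ A j ⊆ A i) (s i)) :=
        (Γ.res_res hW _ (s i)).symm
    _ = Γ.res hW (Γ.res (inter_subset_right : A i ∩ A j ⊆ A j) (s j)) := by rw [hcompat]
    _ = Γ.res h' (s j) := Γ.res_res hW _ (s j)

/-- Build a compatible family over `𝒲` by restricting a compatible system `s`. -/
noncomputable def restrictCompat (Γ : Psh R X) {ι : Type u} (A : ι → Set X) (s : ∀ i, Γ.sec (A i))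
    (hcompat : ∀ i j, Γ.res (inter_subset_left : A i ∩ A j ⊆ A i) (s i)
      = Γ.res inter_subset_right (s j))
    (𝒲 : Set (Set X)) (hr : ∀ W ∈ 𝒲, ∃ i, W ⊆ A i) : Compat R Γ 𝒲 :=
  ⟨fun W => Γ.res (hr W W.2).choose_spec (s (hr W W.2).choose), by
    show ∀ W W' : ↥𝒲, _
    intro W W'
    show Γ.res _ (Γ.res _ _) = Γ.res _ (Γ.res _ _)
    rw [Γ.res_res, Γ.res_res]
    exact res_agree Γ hcompat _ _⟩

lemma restrictCompat_apply (Γ : Psh R X) {ι : Type u} (A : ι → Set X) (s : ∀ i, Γ.sec (A i))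
    (hcompat : ∀ i j, Γ.res (inter_subset_left : A i ∩ A j ⊆ A i) (s i)
      = Γ.res inter_subset_right (s j))
    (𝒲 : Set (Set X)) (hr : ∀ W ∈ 𝒲, ∃ i, W ⊆ A i)
    (W : ↥𝒲) (i : ι) (h : ↑W ⊆ A i) :
    (restrictCompat Γ A s hcompat 𝒲 hr).1 W = Γ.res h (s i) :=
  res_agree Γ hcompat _ h

lemma compat_apply {Γ : Psh R X} {𝒰 : Set (Set X)} (γ : Compat R Γ 𝒰) (U V : ↥𝒰) :
    Γ.res (inter_subset_left : (↑U : Set X) ∩ ↑V ⊆ ↑U) (γ.1 U) =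
    Γ.res (inter_subset_right : (↑U : Set X) ∩ ↑V ⊆ ↑V) (γ.1 V) := γ.2 U V


lemma iota_inj {Γ Q : Psh R X} (hM : CondM R Γ (allOpens X))
    (hQ : PlusData R Γ Q (allOpens X)) {V : Set X}
    {𝒰 : Set (Set X)} (hU : 𝒰 ⊆ allOpens X) (hc : IsCover 𝒰 V)
    (γ : Compat R Γ 𝒰) (h0 : hQ.ι hU hc γ = 0) : γ = 0 := by
  obtain ⟨𝒲, hW, hcW, href, hres⟩ := hQ.ι_exact hU hc γ h0
  apply Subtype.ext
  funext U
  -- cover of ↑U by {W ∩ ↑U}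
  set 𝒱 : Set (Set X) := (fun W => W ∩ ↑U) '' 𝒲 with h𝒱
  have hVopen : 𝒱 ⊆ allOpens X := by
    rintro _ ⟨W, hWm, rfl⟩
    exact (hW hWm).inter (hU U.2)
  have hcV : IsCover 𝒱 ↑U := by
    refine ⟨fun A hA => hVopen hA, ?_, ?_⟩
    · rintro _ ⟨W, hWm, rfl⟩; exact inter_subset_right
    · intro x hx
      obtain ⟨W, hWm, hxW⟩ := hcW.covers (hc.subset _ U.2 hx)
      exact ⟨W ∩ ↑U, ⟨W, hWm, rfl⟩, hxW, hx⟩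
  have := hM ↑U (hU U.2) 𝒱 hVopen hcV (γ.1 U) ?_
  · exact this
  rintro _ ⟨W, hWm, rfl⟩
  obtain ⟨U₀, hU₀, hWU₀⟩ := href W hWm
  have h1 : W ∩ ↑U ⊆ ↑U := inter_subset_right
  have h2 : W ∩ ↑U ⊆ U₀ := inter_subset_left.trans hWU₀
  have e1 : Γ.res (hcV.subset _ ⟨W, hWm, rfl⟩) (γ.1 U) =
      Γ.res h2 (γ.1 ⟨U₀, hU₀⟩) :=
    res_agree Γ (A := fun i : ↥𝒰 => (i : Set X)) (fun i j => compat_apply γ i j)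
      (i := U) (j := ⟨U₀, hU₀⟩) _ h2
  rw [e1]
  have : Γ.res h2 (γ.1 ⟨U₀, hU₀⟩) =
      Γ.res (inter_subset_left : W ∩ ↑U ⊆ W) (Γ.res hWU₀ (γ.1 ⟨U₀, hU₀⟩)) :=
    (Γ.res_res _ _ _).symm
  rw [this, hres ⟨W, hWm⟩ ⟨U₀, hU₀⟩ hWU₀, map_zero]

lemma plus_condM {Γ Q : Psh R X} (hM : CondM R Γ (allOpens X))
    (hQ : PlusData R Γ Q (allOpens X)) : CondM R Q (allOpens X) := by
  intro V hV 𝒰 hU hc s hres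
  obtain ⟨𝒰₀, hU₀, hc₀, γ, rfl⟩ := hQ.ι_surj hV s
  have hcomp := fun i j => compat_apply γ i j
  -- show γ = 0
  have hγ0 : γ = 0 := by
    apply Subtype.ext; funext U₀
    -- for each U ∈ 𝒰, restriction of γ to the cover {U₀' ∩ U} vanishes
    have key : ∀ U (hUm : U ∈ 𝒰) (U₀' : ↥𝒰₀) (h : ↑U₀' ∩ U ⊆ ↑U₀'),
        Γ.res h (γ.1 U₀') = 0 := by
      intro U hUm U₀' h
      set 𝒱 : Set (Set X) := (fun A => A ∩ U) '' 𝒰₀ with h𝒱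
      have hVopen : 𝒱 ⊆ allOpens X := by
        rintro _ ⟨A, hAm, rfl⟩
        exact (hU₀ hAm).inter (hU hUm)
      have hr : ∀ W ∈ 𝒱, ∃ i : ↥𝒰₀, W ⊆ ↑i := by
        rintro _ ⟨A, hAm, rfl⟩; exact ⟨⟨A, hAm⟩, inter_subset_left⟩
      have hcV : IsCover 𝒱 U := by
        refine ⟨fun A hA => hVopen hA, ?_, ?_⟩
        · rintro _ ⟨A, hAm, rfl⟩; exact inter_subset_right
        · intro x hx
          obtain ⟨A, hAm, hxA⟩ := hc₀.covers (hc.subset _ hUm hx)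
          exact ⟨A ∩ U, ⟨A, hAm, rfl⟩, hxA, hx⟩
      set δ := restrictCompat Γ (fun i : ↥𝒰₀ => ↑i) γ.1 hcomp 𝒱 hr with hδ
      have hres2 : Q.res (hc.subset U hUm) (hQ.ι hU₀ hc₀ γ) = hQ.ι hVopen hcV δ := by
        refine hQ.ι_res (hc.subset U hUm) hU₀ hc₀ hVopen hcV γ δ ?_ ?_
        · rintro _ ⟨A, hAm, rfl⟩; exact ⟨A, hAm, inter_subset_left⟩
        · intro W U' h
          exact restrictCompat_apply Γ _ γ.1 hcomp 𝒱 hr W U' h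
      rw [hres U hUm] at hres2
      have hδ0 : δ = 0 := iota_inj hM hQ hVopen hcV δ hres2.symm
      have : δ.1 ⟨↑U₀' ∩ U, ⟨↑U₀', U₀'.2, rfl⟩⟩ = Γ.res h (γ.1 U₀') :=
        restrictCompat_apply Γ _ γ.1 hcomp 𝒱 hr _ U₀' h
      rw [hδ0] at this
      exact this.symm
    -- now apply (M) for Γ on ↑U₀ with the cover {U₀ ∩ U : U ∈ 𝒰}
    set 𝒱 : Set (Set X) := (fun U => ↑U₀ ∩ U) '' 𝒰 with h𝒱
    have hVopen : 𝒱 ⊆ allOpens X := by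
      rintro _ ⟨A, hAm, rfl⟩
      exact (hU₀ U₀.2).inter (hU hAm)
    have hcV : IsCover 𝒱 ↑U₀ := by
      refine ⟨fun A hA => hVopen hA, ?_, ?_⟩
      · rintro _ ⟨A, hAm, rfl⟩; exact inter_subset_left
      · intro x hx
        obtain ⟨A, hAm, hxA⟩ := hc.covers (hc₀.subset _ U₀.2 hx)
        exact ⟨↑U₀ ∩ A, ⟨A, hAm, rfl⟩, hx, hxA⟩
    refine hM ↑U₀ (hU₀ U₀.2) 𝒱 hVopen hcV (γ.1 U₀) ?_
    rintro _ ⟨A, hAm, rfl⟩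
    have := key A hAm U₀ inter_subset_left
    rw [show hcV.subset _ ⟨A, hAm, rfl⟩ = (inter_subset_left : ↑U₀ ∩ A ⊆ ↑U₀) from rfl]
    exact this
  rw [hγ0, map_zero]

lemma plus_condG {Γ Q : Psh R X} (hM : CondM R Γ (allOpens X))
    (hQ : PlusData R Γ Q (allOpens X)) : CondG R Q (allOpens X) := by
  intro V hV 𝒰 hU hc γ
  have hrep : ∀ U : ↥𝒰, ∃ (𝒞 : Set (Set X)) (h𝒞 : 𝒞 ⊆ allOpens X)
      (hc𝒞 : IsCover 𝒞 ↑U) (σ : Compat R Γ 𝒞), hQ.ι h𝒞 hc𝒞 σ = γ.1 U :=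
    fun U => hQ.ι_surj (hU U.2) (γ.1 U)
  choose 𝒞 h𝒞 hc𝒞 σ hσ using hrep
  -- key agreement claim
  have key : ∀ (U U' : ↥𝒰) (A : Set X) (hA : A ∈ 𝒞 U) (A' : Set X) (hA' : A' ∈ 𝒞 U'),
      Γ.res (inter_subset_left : A ∩ A' ⊆ A) ((σ U).1 ⟨A, hA⟩)
        = Γ.res (inter_subset_right : A ∩ A' ⊆ A') ((σ U').1 ⟨A', hA'⟩) := by
    intro U U' A hA A' hA'
    set 𝒟 : Set (Set X) := image2 (· ∩ ·) (𝒞 U) (𝒞 U') with h𝒟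
    have hDopen : 𝒟 ⊆ allOpens X := by
      rintro _ ⟨B, hB, B', hB', rfl⟩
      exact (h𝒞 U hB).inter (h𝒞 U' hB')
    have hcD : IsCover 𝒟 (↑U ∩ ↑U') := by
      refine ⟨fun B hB => hDopen hB, ?_, ?_⟩
      · rintro _ ⟨B, hB, B', hB', rfl⟩
        exact inter_subset_inter ((hc𝒞 U).subset B hB) ((hc𝒞 U').subset B' hB')
      · rintro x ⟨hx, hx'⟩
        obtain ⟨B, hB, hxB⟩ := (hc𝒞 U).covers hx
        obtain ⟨B', hB', hxB'⟩ := (hc𝒞 U').covers hx'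
        exact ⟨B ∩ B', ⟨B, hB, B', hB', rfl⟩, hxB, hxB'⟩
    have hr : ∀ W ∈ 𝒟, ∃ i : ↥(𝒞 U), W ⊆ ↑i := by
      rintro _ ⟨B, hB, B', hB', rfl⟩; exact ⟨⟨B, hB⟩, inter_subset_left⟩
    have hr' : ∀ W ∈ 𝒟, ∃ i : ↥(𝒞 U'), W ⊆ ↑i := by
      rintro _ ⟨B, hB, B', hB', rfl⟩; exact ⟨⟨B', hB'⟩, inter_subset_right⟩
    have hcompU := fun i j => compat_apply (σ U) i j
    have hcompU' := fun i j => compat_apply (σ U') i j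
    set δ := restrictCompat Γ (fun i : ↥(𝒞 U) => (i : Set X)) (σ U).1 hcompU 𝒟 hr with hδdef
    set δ' := restrictCompat Γ (fun i : ↥(𝒞 U') => (i : Set X)) (σ U').1 hcompU' 𝒟 hr'
      with hδ'def
    have e1 : Q.res (inter_subset_left : (↑U : Set X) ∩ ↑U' ⊆ ↑U) (γ.1 U) = hQ.ι hDopen hcD δ := by
      rw [← hσ U]
      refine hQ.ι_res _ (h𝒞 U) (hc𝒞 U) hDopen hcD (σ U) δ ?_ ?_
      · rintro _ ⟨B, hB, B', hB', rfl⟩; exact ⟨B, hB, inter_subset_left⟩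
      · intro W B h; exact restrictCompat_apply Γ _ (σ U).1 hcompU 𝒟 hr W B h
    have e2 : Q.res (inter_subset_right : (↑U : Set X) ∩ ↑U' ⊆ ↑U') (γ.1 U') = hQ.ι hDopen hcD δ' := by
      rw [← hσ U']
      refine hQ.ι_res _ (h𝒞 U') (hc𝒞 U') hDopen hcD (σ U') δ' ?_ ?_
      · rintro _ ⟨B, hB, B', hB', rfl⟩; exact ⟨B', hB', inter_subset_right⟩
      · intro W B h; exact restrictCompat_apply Γ _ (σ U').1 hcompU' 𝒟 hr' W B h
    have e3 : hQ.ι hDopen hcD δ = hQ.ι hDopen hcD δ' :=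
      e1.symm.trans ((compat_apply γ U U').trans e2)
    have hδδ : δ = δ' := by
      have h0 : hQ.ι hDopen hcD (δ - δ') = 0 := by
        rw [map_sub, e3, sub_self]
      exact sub_eq_zero.mp (iota_inj hM hQ hDopen hcD _ h0)
    have hmem : A ∩ A' ∈ 𝒟 := ⟨A, hA, A', hA', rfl⟩
    have v1 : δ.1 ⟨A ∩ A', hmem⟩
        = Γ.res (inter_subset_left : A ∩ A' ⊆ A) ((σ U).1 ⟨A, hA⟩) :=
      restrictCompat_apply Γ _ (σ U).1 hcompU 𝒟 hr ⟨A ∩ A', hmem⟩ ⟨A, hA⟩ inter_subset_left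
    have v2 : δ'.1 ⟨A ∩ A', hmem⟩
        = Γ.res (inter_subset_right : A ∩ A' ⊆ A') ((σ U').1 ⟨A', hA'⟩) :=
      restrictCompat_apply Γ _ (σ U').1 hcompU' 𝒟 hr' ⟨A ∩ A', hmem⟩ ⟨A', hA'⟩
        inter_subset_right
    rw [← v1, ← v2, hδδ]
  -- the big cover
  set 𝒲 : Set (Set X) := {A : Set X | ∃ U : ↥𝒰, A ∈ 𝒞 U} with h𝒲
  have h𝒲open : 𝒲 ⊆ allOpens X := by
    rintro A ⟨U, hA⟩; exact h𝒞 U hA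
  have hc𝒲 : IsCover 𝒲 V := by
    refine ⟨fun A hA => h𝒲open hA, ?_, ?_⟩
    · rintro A ⟨U, hA⟩; exact ((hc𝒞 U).subset A hA).trans (hc.subset _ U.2)
    · intro x hx
      obtain ⟨U, hUm, hxU⟩ := hc.covers hx
      obtain ⟨A, hA, hxA⟩ := (hc𝒞 ⟨U, hUm⟩).covers hxU
      exact ⟨A, ⟨⟨U, hUm⟩, hA⟩, hxA⟩
  -- the combined family over 𝒲
  have hcomp2 : ∀ p q : (U : ↥𝒰) × ↥(𝒞 U),
      Γ.res (inter_subset_left : (↑p.2 : Set X) ∩ ↑q.2 ⊆ ↑p.2) ((σ p.1).1 p.2)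
        = Γ.res inter_subset_right ((σ q.1).1 q.2) :=
    fun p q => key p.1 q.1 ↑p.2 p.2.2 ↑q.2 q.2.2
  have hr2 : ∀ W ∈ 𝒲, ∃ p : (U : ↥𝒰) × ↥(𝒞 U), W ⊆ ↑p.2 := by
    rintro A ⟨U, hA⟩; exact ⟨⟨U, ⟨A, hA⟩⟩, subset_refl A⟩
  set σT := restrictCompat Γ (fun p : (U : ↥𝒰) × ↥(𝒞 U) => (p.2 : Set X))
    (fun p => (σ p.1).1 p.2) hcomp2 𝒲 hr2 with hσTdef
  refine ⟨hQ.ι h𝒲open hc𝒲 σT, ?_⟩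
  intro U hUm
  rw [← hσ ⟨U, hUm⟩]
  refine hQ.ι_res _ h𝒲open hc𝒲 (h𝒞 ⟨U, hUm⟩) (hc𝒞 ⟨U, hUm⟩) σT (σ ⟨U, hUm⟩) ?_ ?_
  · intro A hA; exact ⟨A, ⟨⟨U, hUm⟩, hA⟩, subset_refl A⟩
  · intro W B h
    obtain ⟨U'', hBU''⟩ := B.2
    have e1 : σT.1 B = Γ.res (subset_refl (B : Set X)) ((σ U'').1 ⟨↑B, hBU''⟩) :=
      restrictCompat_apply Γ (fun p : (U : ↥𝒰) × ↥(𝒞 U) => (p.2 : Set X))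
        (fun p => (σ p.1).1 p.2) hcomp2 𝒲 hr2 B
        ⟨U'', ⟨↑B, hBU''⟩⟩ (subset_refl _)
    calc (σ ⟨U, hUm⟩).1 W
        = Γ.res (subset_refl (W : Set X)) ((σ ⟨U, hUm⟩).1 W) := (Γ.res_self _ _).symm
      _ = Γ.res (h.trans (subset_refl (B : Set X)))
            ((σ U'').1 ⟨↑B, hBU''⟩) :=
          res_agree Γ hcomp2 (i := ⟨⟨U, hUm⟩, W⟩) (j := ⟨U'', ⟨↑B, hBU''⟩⟩) _ _
      _ = Γ.res h (σT.1 B) := by rw [e1, Γ.res_res]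

section Push
variable {Y : Type u} [TopologicalSpace Y] (φ : X → Y)

lemma push_cover (hφc : Continuous φ) {V : Set Y} {𝒰 : Set (Set Y)} (hU : 𝒰 ⊆ allOpens Y) (hc : IsCover 𝒰 V) :
    ((fun U => φ ⁻¹' U) '' 𝒰) ⊆ allOpens X ∧
      IsCover ((fun U => φ ⁻¹' U) '' 𝒰) (φ ⁻¹' V) := by
  have hop : ((fun U => φ ⁻¹' U) '' 𝒰) ⊆ allOpens X := by
    rintro _ ⟨U, hUm, rfl⟩
    exact IsOpen.preimage hφc (hU hUm)
  refine ⟨hop, fun W hW => hop hW, ?_, ?_⟩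
  · rintro _ ⟨U, hUm, rfl⟩
    exact preimage_mono (hc.subset U hUm)
  · intro x hx
    obtain ⟨U, hUm, hxU⟩ := hc.covers hx
    exact ⟨φ ⁻¹' U, ⟨U, hUm, rfl⟩, hxU⟩

lemma push_condM (hφc : Continuous φ) {Γ : Psh R X} (hM : CondM R Γ (allOpens X)) :
    CondM R (pushf R φ Γ) (allOpens Y) := by
  intro V hV 𝒰 hU hc s hres
  obtain ⟨hop, hcov⟩ := push_cover φ hφc hU hc
  refine hM (φ ⁻¹' V) (hV.preimage hφc) _ hop hcov s ?_
  rintro _ ⟨U, hUm, rfl⟩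
  exact hres U hUm

lemma push_condG (hφc : Continuous φ) {Q : Psh R X} (hG : CondG R Q (allOpens X)) :
    CondG R (pushf R φ Q) (allOpens Y) := by
  intro V hV 𝒰 hU hc γ
  obtain ⟨hop, hcov⟩ := push_cover φ hφc hU hc
  have hcomp : ∀ i j : ↥𝒰,
      Q.res (inter_subset_left : φ ⁻¹' ↑i ∩ φ ⁻¹' ↑j ⊆ φ ⁻¹' ↑i) (γ.1 i)
        = Q.res inter_subset_right (γ.1 j) := fun i j => compat_apply γ i j
  have hr : ∀ W ∈ (fun U => φ ⁻¹' U) '' 𝒰, ∃ i : ↥𝒰, W ⊆ φ ⁻¹' ↑i := by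
    rintro _ ⟨U, hUm, rfl⟩; exact ⟨⟨U, hUm⟩, subset_refl _⟩
  set δ := restrictCompat Q (fun i : ↥𝒰 => φ ⁻¹' ↑i) γ.1 hcomp _ hr with hδdef
  obtain ⟨s, hs⟩ := hG (φ ⁻¹' V) (hV.preimage hφc) _ hop hcov δ
  refine ⟨s, ?_⟩
  intro U hUm
  have e := hs (φ ⁻¹' U) ⟨U, hUm, rfl⟩
  have e2 : δ.1 ⟨φ ⁻¹' U, ⟨U, hUm, rfl⟩⟩ = γ.1 ⟨U, hUm⟩ := by
    have := restrictCompat_apply Q (fun i : ↥𝒰 => φ ⁻¹' ↑i) γ.1 hcomp _ hr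
      ⟨φ ⁻¹' U, ⟨U, hUm, rfl⟩⟩ ⟨U, hUm⟩ (subset_refl _)
    rw [this]; exact Q.res_self _ _
  exact e.trans e2

end Push
/-- for a surjective continuous `φ : X → Y` and a presheaf `Γ` on `X`
satisfying (M), both `(φ_*Γ)⁺` and `φ_*(Γ⁺)` are sheaves on `Y` and the natural map
`(φ_*Γ)⁺ → φ_*(Γ⁺)` is injective.  Here `P` is `(φ_*Γ)⁺`, `Q` is `Γ⁺`, and the natural
map is any presheaf map `θ` compatible with the colimit structure maps. -/
theorem statement4 (R : Type u) [CommRing R] {X Y : Type u}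
    [TopologicalSpace X] [TopologicalSpace Y]
    (φ : X → Y) (hφc : Continuous φ) (hφs : Function.Surjective φ)
    (Γ : Psh R X) (hM : CondM R Γ (allOpens X))
    (P : Psh R Y) (hP : PlusData R (pushf R φ Γ) P (allOpens Y))
    (Q : Psh R X) (hQ : PlusData R Γ Q (allOpens X)) :
    (CondM R P (allOpens Y) ∧ CondG R P (allOpens Y)) ∧
    (CondM R (pushf R φ Q) (allOpens Y) ∧ CondG R (pushf R φ Q) (allOpens Y)) ∧
    (∀ θ : PshHom R P (pushf R φ Q),
      (∀ (V : Set Y) (𝒰 : Set (Set Y)) (hU : 𝒰 ⊆ allOpens Y) (hc : IsCover 𝒰 V)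
          (hU' : ((fun U => φ ⁻¹' U) '' 𝒰) ⊆ allOpens X)
          (hc' : IsCover ((fun U => φ ⁻¹' U) '' 𝒰) (φ ⁻¹' V))
          (γ : Compat R (pushf R φ Γ) 𝒰)
          (δ : Compat R Γ ((fun U => φ ⁻¹' U) '' 𝒰)),
          (∀ (U : ↥𝒰), δ.1 ⟨φ ⁻¹' ↑U, ⟨↑U, U.2, rfl⟩⟩ = γ.1 U) →
          θ.app V (hP.ι hU hc γ) = hQ.ι hU' hc' δ) →
      ∀ (V : Set Y), IsOpen V → Function.Injective (θ.app V)) := by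

  have hPM : CondM R (pushf R φ Γ) (allOpens Y) := push_condM φ hφc hM
  refine ⟨⟨plus_condM hPM hP, plus_condG hPM hP⟩,
    ⟨push_condM φ hφc (plus_condM hM hQ), push_condG φ hφc (plus_condG hM hQ)⟩, ?_⟩
  intro θ H V hV
  have ker0 : ∀ p : P.sec V, θ.app V p = 0 → p = 0 := by
    intro p hp
    obtain ⟨𝒰, hU, hc, γ, rfl⟩ := hP.ι_surj hV p
    obtain ⟨hU', hc'⟩ := push_cover φ hφc hU hc
    have hcomp : ∀ i j : ↥𝒰,
        Γ.res (inter_subset_left : φ ⁻¹' ↑i ∩ φ ⁻¹' ↑j ⊆ φ ⁻¹' ↑i) (γ.1 i)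
          = Γ.res inter_subset_right (γ.1 j) := fun i j => compat_apply γ i j
    have hr : ∀ W ∈ (fun U => φ ⁻¹' U) '' 𝒰, ∃ i : ↥𝒰, W ⊆ φ ⁻¹' ↑i := by
      rintro _ ⟨U, hUm, rfl⟩; exact ⟨⟨U, hUm⟩, subset_refl _⟩
    set δ := restrictCompat Γ (fun i : ↥𝒰 => φ ⁻¹' ↑i) γ.1 hcomp _ hr with hδdef
    have hval : ∀ U : ↥𝒰, δ.1 ⟨φ ⁻¹' ↑U, ⟨↑U, U.2, rfl⟩⟩ = γ.1 U := by
      intro U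
      have := restrictCompat_apply Γ (fun i : ↥𝒰 => φ ⁻¹' ↑i) γ.1 hcomp _ hr
        ⟨φ ⁻¹' ↑U, ⟨↑U, U.2, rfl⟩⟩ U (subset_refl _)
      rw [this]; exact Γ.res_self _ _
    have hθ := H V 𝒰 hU hc hU' hc' γ δ hval
    rw [hp] at hθ
    have hδ0 : δ = 0 := iota_inj hM hQ hU' hc' δ hθ.symm
    have hγ0 : γ = 0 := by
      apply Subtype.ext; funext U
      have := hval U
      rw [hδ0] at this
      exact this.symm
    rw [hγ0, map_zero]
  intro a b hab
  have := ker0 (a - b) (by rw [map_sub, hab, sub_self])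
  exact sub_eq_zero.mp this
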